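/- Let e be an effect on a complex Hilbert space H and let z := P_{ker(1−e)} be the orthogonal projection onto {x ∈ H : e x = x}. Then: (i) e − e² = (e − z) − (e − z)²; (ii) e − e² is projection free, i.e., the only projection q ∈ B(H) with q ≤ e − e² is q = 0. -/

import Mathlib

theorem stmt13 {H : Type*} [NormedAddCommGroup H] [InnerProductSpace ℂ H] [CompleteSpace H]
    (e z : H →L[ℂ] H) (he0 : 0 ≤ e) (he1 : e ≤ 1)
    (hz : IsSelfAdjoint z) (hz2 : z ^ 2 = z)
    (hzran : LinearMap.range (z : H →ₗ[ℂ] H) = LinearMap.ker ((1 - e : H →L[ℂ] H) : H →ₗ[ℂ] H)) :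
    e - e ^ 2 = (e - z) - (e - z) ^ 2 ∧
    ∀ q : H →L[ℂ] H, IsSelfAdjoint q → q ^ 2 = q → q ≤ e - e ^ 2 → q = 0 := by
  have he : IsSelfAdjoint e := IsSelfAdjoint.of_nonneg he0
  have hez : e * z = z := by
    ext x
    have hmem : z x ∈ LinearMap.ker ((1 - e : H →L[ℂ] H) : H →ₗ[ℂ] H) := by
      rw [← hzran]; exact ⟨x, rfl⟩
    have := LinearMap.mem_ker.mp hmem
    have h1 : z x - e (z x) = 0 := by simpa using this
    have h2 : z x = e (z x) := by
      have := sub_eq_zero.mp h1; exact this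
    simpa [ContinuousLinearMap.mul_apply] using h2.symm
  have hze : z * e = z := by
    have := congrArg star hez
    simpa [star_mul, hz.star_eq, he.star_eq] using this
  have hzz : z * z = z := by simpa [sq] using hz2
  constructor
  · have h2 : (e - z) ^ 2 = e ^ 2 - z := by
      simp only [sq, sub_mul, mul_sub, hez, hze, hzz]
      abel
    rw [h2]; abel
  · intro q hq hq2 hqle
    have hqq : q * q = q := by simpa [sq] using hq2
    have hq0 : 0 ≤ q := by
      calc (0 : H →L[ℂ] H) ≤ star q * q := star_mul_self_nonneg q
      _ = q := by rw [hq.star_eq, hqq]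
    have hq1 : q ≤ 1 := by
      have h := star_mul_self_nonneg (1 - q)
      have hs : star (1 - q) = 1 - q := by simp [star_sub, hq.star_eq]
      have heq : (1 - q) * (1 - q) = 1 - q := by
        simp only [sub_mul, mul_sub, mul_one, one_mul, hqq]; abel
      rw [hs, heq] at h
      exact sub_nonneg.mp h
    set a : H →L[ℂ] H := q * e * q with ha
    have haq : a ≤ q := by
      have := star_left_conjugate_le_conjugate he1 q
      simpa [hq.star_eq, hqq] using this
    have hc1 : q ≤ q * (e - e ^ 2) * q := by
      have := star_left_conjugate_le_conjugate hqle q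
      calc q = q * q * q := by rw [hqq, hqq]
      _ ≤ q * (e - e ^ 2) * q := by simpa [hq.star_eq] using this
    have hst : star (e * q) = q * e := by rw [star_mul, hq.star_eq, he.star_eq]
    have hc2 : a * a ≤ q * e ^ 2 * q := by
      have h := star_left_conjugate_le_conjugate hq1 (e * q)
      rw [hst] at h
      calc a * a = q * e * (q * q) * (e * q) := by rw [ha]; noncomm_ring
      _ = q * e * q * (e * q) := by rw [hqq]
      _ ≤ q * e * 1 * (e * q) := by simpa [mul_assoc] using h
      _ = q * e ^ 2 * q := by noncomm_ring
    have hsplit : q * (e - e ^ 2) * q = a - q * e ^ 2 * q := by rw [ha]; noncomm_ring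
    have h1 : q ≤ a - q * e ^ 2 * q := hsplit ▸ hc1
    have h2 : a - q * e ^ 2 * q ≤ a - a * a := sub_le_sub_left hc2 a
    have haa : 0 ≤ a * a := by
      have hsa : star a = a := by
        rw [ha]; simp [star_mul, hq.star_eq, he.star_eq, mul_assoc]
      calc (0:H →L[ℂ] H) ≤ star a * a := star_mul_self_nonneg a
      _ = a * a := by rw [hsa]
    have hqa : q ≤ a := le_trans h1 (le_trans h2 (sub_le_self _ haa))
    have haeq : a = q := le_antisymm haq hqa
    have hfinal : q ≤ 0 := by
      calc q ≤ a - q * e ^ 2 * q := h1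
      _ ≤ a - a * a := h2
      _ = 0 := by rw [haeq, hqq, sub_self]
    exact le_antisymm hfinal hq0
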